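/- Let n, m, t be integers with 1 ≤ m ≤ n and 0 ≤ t ≤ m−1. Then B_n(m,t) is a minimum blocker of all n×n 123-avoiding permutation matrices: B_n(m,t) is a blocker, and for every position b ∈ B_n(m,t), the set B_n(m,t) \ {b} is not a blocker (equivalently, for every b = (i₀, j₀) ∈ B_n(m,t) there exists a 123-avoiding permutation σ with σ(i₀) = j₀ and (i, σ(i)) ∉ B_n(m,t) for all i ≠ i₀). -/

import Mathlib

set_option linter.unusedSectionVars false

/-- A permutation of `Fin n` is `123`-avoiding if it has no increasing
subsequence of length 3. -/
def Avoids123 {n : ℕ} (σ : Equiv.Perm (Fin n)) : Prop :=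
  ∀ i j k : Fin n, i < j → j < k → σ i < σ j → ¬ σ j < σ k

/-- A set of positions is a blocker of all `n × n` `123`-avoiding permutation
matrices if every `123`-avoiding permutation meets it. -/
def IsBlocker {n : ℕ} (B : Set (Fin n × Fin n)) : Prop :=
  ∀ σ : Equiv.Perm (Fin n), Avoids123 σ → ∃ i : Fin n, (i, σ i) ∈ B

/-- The flag-shaped blocker `B_n(m,t)` (with `1`-based row/column indices
`i+1`, `j+1` for `(i,j) : Fin n × Fin n`): the "pole"
`{(i,m) : 1 ≤ i ≤ n-t}` together with the "flag"
`{(i,j) : 1 ≤ i ≤ n-m+1, m-t ≤ j ≤ m-1}`. -/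
def FlagBlocker (n m t : ℕ) : Set (Fin n × Fin n) :=
  {p | ((p.2 : ℕ) + 1 = m ∧ (p.1 : ℕ) + 1 + t ≤ n) ∨
       ((p.1 : ℕ) + m ≤ n ∧ m ≤ (p.2 : ℕ) + 1 + t ∧ (p.2 : ℕ) + 2 ≤ m)}

/-- The permutation matrix of `σ`: the real `(0,1)`-matrix with a `1` in
position `(i, j)` exactly when `j = σ i`. -/
def permMatrix (n : ℕ) (σ : Equiv.Perm (Fin n)) : Matrix (Fin n) (Fin n) ℝ :=
  fun i j => if σ i = j then 1 else 0

/-! ### Auxiliary machinery -/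

/-- Build a permutation of `Fin n` from a natural-number function. -/
noncomputable def mkPerm (n : ℕ) (f : ℕ → ℕ) (hlt : ∀ i < n, f i < n)
    (hinj : ∀ i j, i < n → j < n → f i = f j → i = j) : Equiv.Perm (Fin n) :=
  Equiv.ofBijective (fun i => ⟨f i, hlt i i.2⟩)
    ((Finite.injective_iff_bijective).1 (fun i j h => Fin.ext (hinj i j i.2 j.2 (by
      simpa using congrArg Fin.val h))))

lemma mkPerm_apply (n : ℕ) (f : ℕ → ℕ) (hlt : ∀ i < n, f i < n)
    (hinj : ∀ i j, i < n → j < n → f i = f j → i = j) (i : Fin n) :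
    ((mkPerm n f hlt hinj) i : ℕ) = f i := rfl

/-- A permutation whose rows split into two classes, on each of which it is
strictly decreasing, is `123`-avoiding. -/
lemma avoids_of_partition {n : ℕ} (σ : Equiv.Perm (Fin n)) (P : ℕ → Prop)
    (h1 : ∀ i j : Fin n, i < j → P i → P j → σ j < σ i)
    (h2 : ∀ i j : Fin n, i < j → ¬P i → ¬P j → σ j < σ i) :
    Avoids123 σ := by
  intro i j k hij hjk hab hbc
  have hik := hij.trans hjk
  by_cases pi : P (i : ℕ) <;> by_cases pj : P (j : ℕ) <;> by_cases pk : P (k : ℕ)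
  · exact lt_asymm hab (h1 i j hij pi pj)
  · exact lt_asymm hab (h1 i j hij pi pj)
  · exact lt_asymm (hab.trans hbc) (h1 i k hik pi pk)
  · exact lt_asymm hbc (h2 j k hjk pj pk)
  · exact lt_asymm hbc (h1 j k hjk pj pk)
  · exact lt_asymm (hab.trans hbc) (h2 i k hik pi pk)
  · exact lt_asymm hab (h2 i j hij pi pj)
  · exact lt_asymm hab (h2 i j hij pi pj)

/-- If there is a `123`-avoiding permutation meeting `B` only (possibly) at `b`,
then `B \ {b}` is not a blocker. -/
lemma not_blocker_of_witness {n : ℕ} (B : Set (Fin n × Fin n)) (b : Fin n × Fin n)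
    (σ : Equiv.Perm (Fin n)) (h1 : Avoids123 σ)
    (h2 : ∀ i : Fin n, (i, σ i) ∈ B → (i, σ i) = b) :
    ¬ IsBlocker (B \ {b}) := by
  intro hB
  obtain ⟨i, hi⟩ := hB σ h1
  exact hi.2 (h2 i hi.1)

/-! ### Part 1: `FlagBlocker` is a blocker -/

lemma flag_isBlocker (n m t : ℕ) (hm1 : 1 ≤ m) (hmn : m ≤ n) (ht : t + 1 ≤ m) :
    IsBlocker (FlagBlocker n m t) := by
  intro σ hσ
  by_contra hcon
  push_neg at hcon
  simp only [FlagBlocker, Set.mem_setOf_eq, not_or] at hcon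
  have mpos : m - 1 < n := by omega
  set r : Fin n := σ.symm ⟨m - 1, mpos⟩ with hrdef
  have hrm : σ r = ⟨m - 1, mpos⟩ := σ.apply_symm_apply _
  have hrv : (σ r : ℕ) = m - 1 := by rw [hrm]
  have hP : ∀ i : Fin n, ¬((σ i : ℕ) + 1 = m ∧ (i : ℕ) + 1 + t ≤ n) := fun i => (hcon i).1
  have hF : ∀ i : Fin n, ¬((i : ℕ) + m ≤ n ∧ m ≤ (σ i : ℕ) + 1 + t ∧ (σ i : ℕ) + 2 ≤ m) :=
    fun i => (hcon i).2
  have hr : n < (r : ℕ) + 1 + t := by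
    by_contra h; push_neg at h; exact hP r ⟨by omega, h⟩
  -- Step 1: some row `i0 ≤ n - m` takes a value `≤ m - t - 2`
  have hstar : ∃ i : Fin n, (i : ℕ) + m ≤ n ∧ (σ i : ℕ) + t + 2 ≤ m := by
    by_contra hno; push_neg at hno
    have hnm : n - m < n := by omega
    have hcard := Finset.card_le_card_of_injOn σ
      (s := Finset.Iic (⟨n - m, hnm⟩ : Fin n)) (t := Finset.Ioi (⟨m - 1, mpos⟩ : Fin n))
      ?_ (σ.injective.injOn)
    · rw [Fin.card_Iic, Fin.card_Ioi] at hcard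
      simp only [Fin.val_mk] at hcard
      omega
    · intro i hi
      simp only [Finset.mem_coe, Finset.mem_Iic, Fin.le_def, Fin.val_mk] at hi
      simp only [Finset.mem_coe, Finset.mem_Ioi, Fin.lt_def, Fin.val_mk]
      have h1 := hF i
      have h2 := hP i
      have h3 := hno i (by omega)
      omega
  obtain ⟨i0, hi0m, hi0v⟩ := hstar
  -- Step 2: every row whose value is a flag column lies strictly below row r
  have hstep2 : ∀ j : Fin n, m ≤ (σ j : ℕ) + 1 + t → (σ j : ℕ) + 2 ≤ m → (r : ℕ) < (j : ℕ) := by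
    intro j hj1 hj2
    have hjm : n < (j : ℕ) + m := by
      by_contra h; push_neg at h; exact hF j ⟨h, hj1, hj2⟩
    by_contra hjr; push_neg at hjr
    have hij : i0 < j := by rw [Fin.lt_def]; omega
    have hjne : (j : ℕ) ≠ (r : ℕ) := by
      intro h
      have : j = r := Fin.ext h
      rw [this] at hj2; omega
    have hjr' : j < r := by rw [Fin.lt_def]; omega
    exact hσ i0 j r hij hjr' (by rw [Fin.lt_def]; omega) (by rw [Fin.lt_def]; omega)
  -- Step 3: counting contradiction
  have ht1 : 1 ≤ t := by have := r.isLt; omega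
  have hm2 : m - 2 < n := by omega
  have hm3 : m - t - 1 < n := by omega
  have hcard := Finset.card_le_card_of_injOn σ.symm
    (s := Finset.Icc (⟨m - t - 1, hm3⟩ : Fin n) ⟨m - 2, hm2⟩) (t := Finset.Ioi r)
    ?_ (σ.symm.injective.injOn)
  · rw [Fin.card_Icc, Fin.card_Ioi] at hcard
    simp only [Fin.val_mk] at hcard
    have := r.isLt
    omega
  · intro v hv
    simp only [Finset.mem_coe, Finset.mem_Icc, Fin.le_def, Fin.val_mk] at hv
    simp only [Finset.mem_coe, Finset.mem_Ioi, Fin.lt_def]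
    have hv' : (σ (σ.symm v) : ℕ) = (v : ℕ) := by rw [σ.apply_symm_apply]
    exact hstep2 (σ.symm v) (by omega) (by omega)

/-! ### Part 2: witnesses for minimality -/

/-- Construction X: witness permutation for a removed position `(r, c)` with
`r + m ≤ n` (0-based) and `m - t - 1 ≤ c ≤ m - 1`. -/
def fX (n m t r c : ℕ) : ℕ → ℕ := fun i =>
  if i < r then n - 1 - i
  else if i = r then c
  else if i ≤ n - m then n - i
  else if i ≤ n - t - 1 then c + n - m - i
  else if i ≤ n - t + m - c - 2 then m - 1 + n - t - i
  else n - 1 - i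

/-- class-1 rows for construction X -/
def PX (n m t r c i : ℕ) : Prop :=
  i < r ∨ (r < i ∧ i ≤ n - m) ∨ (n - t ≤ i ∧ i ≤ n - t + m - c - 2)

section X
variable {n m t r c : ℕ} (hm : 1 ≤ m) (hmn : m ≤ n) (ht : t + 1 ≤ m)
  (hr : r + m ≤ n) (hc1 : m ≤ c + t + 1) (hc2 : c + 1 ≤ m)

include hm hmn ht hr hc1 hc2

lemma fX_lt : ∀ i < n, fX n m t r c i < n := by
  intro i hi; unfold fX; split_ifs <;> omega

lemma fX_inj : ∀ i j, i < n → j < n → fX n m t r c i = fX n m t r c j → i = j := by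
  intro i j hi hj h; unfold fX at h; split_ifs at h <;> omega

lemma fX_dec1 : ∀ i j, i < j → j < n → PX n m t r c i → PX n m t r c j →
    fX n m t r c j < fX n m t r c i := by
  intro i j hij hj p q; unfold PX at p q; unfold fX; split_ifs <;> omega

lemma fX_dec2 : ∀ i j, i < j → j < n → ¬PX n m t r c i → ¬PX n m t r c j →
    fX n m t r c j < fX n m t r c i := by
  intro i j hij hj p q; unfold PX at p q; unfold fX; split_ifs <;> omega

lemma fX_mem : ∀ i < n,
    ((fX n m t r c i + 1 = m ∧ i + 1 + t ≤ n) ∨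
      (i + m ≤ n ∧ m ≤ fX n m t r c i + 1 + t ∧ fX n m t r c i + 2 ≤ m)) →
    i = r ∧ fX n m t r c i = c := by
  intro i hi h; unfold fX at h ⊢; split_ifs at h ⊢ <;> omega

end X

/-- Construction Y: witness permutation for a removed pole position `(r, m-1)`
with `n - m < r ≤ n - t - 1` (0-based). -/
def fY (n m t r : ℕ) : ℕ → ℕ := fun i =>
  if i < n - m then n - 1 - i
  else if i < r then n - t - 2 - i
  else if i ≤ r + t then m - 1 + r - i
  else n - 1 - i

/-- class-1 rows for construction Y -/
def PY (n m t r i : ℕ) : Prop := i < n - m ∨ (r ≤ i ∧ i ≤ r + t)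

section Y
variable {n m t r : ℕ} (hm : 1 ≤ m) (hmn : m ≤ n) (ht : t + 1 ≤ m)
  (hr1 : n < r + m) (hr2 : r + 1 + t ≤ n)

include hm hmn ht hr1 hr2

lemma fY_lt : ∀ i < n, fY n m t r i < n := by
  intro i hi; unfold fY; split_ifs <;> omega

lemma fY_inj : ∀ i j, i < n → j < n → fY n m t r i = fY n m t r j → i = j := by
  intro i j hi hj h; unfold fY at h; split_ifs at h <;> omega

lemma fY_dec1 : ∀ i j, i < j → j < n → PY n m t r i → PY n m t r j →
    fY n m t r j < fY n m t r i := by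
  intro i j hij hj p q; unfold PY at p q; unfold fY; split_ifs <;> omega

lemma fY_dec2 : ∀ i j, i < j → j < n → ¬PY n m t r i → ¬PY n m t r j →
    fY n m t r j < fY n m t r i := by
  intro i j hij hj p q; unfold PY at p q; unfold fY; split_ifs <;> omega

lemma fY_mem : ∀ i < n,
    ((fY n m t r i + 1 = m ∧ i + 1 + t ≤ n) ∨
      (i + m ≤ n ∧ m ≤ fY n m t r i + 1 + t ∧ fY n m t r i + 2 ≤ m)) →
    i = r ∧ fY n m t r i = m - 1 := by
  intro i hi h; unfold fY at h ⊢; split_ifs at h ⊢ <;> omega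

end Y

lemma X_witness (n m t : ℕ) (hm1 : 1 ≤ m) (hmn : m ≤ n) (ht : t + 1 ≤ m)
    (b1 b2 : Fin n) (hr : (b1 : ℕ) + m ≤ n) (hc1 : m ≤ (b2 : ℕ) + t + 1)
    (hc2 : (b2 : ℕ) + 1 ≤ m) :
    ¬ IsBlocker (FlagBlocker n m t \ {(b1, b2)}) := by
  set f := fX n m t (b1 : ℕ) (b2 : ℕ) with hf
  have hlt := fX_lt hm1 hmn ht hr hc1 hc2
  have hinj := fX_inj hm1 hmn ht hr hc1 hc2
  set σ := mkPerm n f hlt hinj with hσdef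
  apply not_blocker_of_witness _ _ σ
  · apply avoids_of_partition σ (PX n m t (b1 : ℕ) (b2 : ℕ))
    · intro i j hij p q
      rw [Fin.lt_def]
      exact fX_dec1 hm1 hmn ht hr hc1 hc2 (i : ℕ) (j : ℕ) (Fin.lt_def.mp hij) j.2 p q
    · intro i j hij p q
      rw [Fin.lt_def]
      exact fX_dec2 hm1 hmn ht hr hc1 hc2 (i : ℕ) (j : ℕ) (Fin.lt_def.mp hij) j.2 p q
  · intro i hmem
    simp only [FlagBlocker, Set.mem_setOf_eq] at hmem
    have hval : ((σ i : Fin n) : ℕ) = f (i : ℕ) := rfl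
    rw [hval] at hmem
    have hres := fX_mem hm1 hmn ht hr hc1 hc2 (i : ℕ) i.2 hmem
    have e1 : i = b1 := Fin.ext hres.1
    have e2 : σ i = b2 := Fin.ext (by rw [hval]; exact hres.2)
    rw [e2, e1]

lemma Y_witness (n m t : ℕ) (hm1 : 1 ≤ m) (hmn : m ≤ n) (ht : t + 1 ≤ m)
    (b1 b2 : Fin n) (hb2 : (b2 : ℕ) + 1 = m) (hr1 : n < (b1 : ℕ) + m)
    (hr2 : (b1 : ℕ) + 1 + t ≤ n) :
    ¬ IsBlocker (FlagBlocker n m t \ {(b1, b2)}) := by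
  set f := fY n m t (b1 : ℕ) with hf
  have hlt := fY_lt hm1 hmn ht hr1 hr2
  have hinj := fY_inj hm1 hmn ht hr1 hr2
  set σ := mkPerm n f hlt hinj with hσdef
  apply not_blocker_of_witness _ _ σ
  · apply avoids_of_partition σ (PY n m t (b1 : ℕ))
    · intro i j hij p q
      rw [Fin.lt_def]
      exact fY_dec1 hm1 hmn ht hr1 hr2 (i : ℕ) (j : ℕ) (Fin.lt_def.mp hij) j.2 p q
    · intro i j hij p q
      rw [Fin.lt_def]
      exact fY_dec2 hm1 hmn ht hr1 hr2 (i : ℕ) (j : ℕ) (Fin.lt_def.mp hij) j.2 p q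
  · intro i hmem
    simp only [FlagBlocker, Set.mem_setOf_eq] at hmem
    have hval : ((σ i : Fin n) : ℕ) = f (i : ℕ) := rfl
    rw [hval] at hmem
    have hres := fY_mem hm1 hmn ht hr1 hr2 (i : ℕ) i.2 hmem
    have e1 : i = b1 := Fin.ext hres.1
    have e2 : σ i = b2 := Fin.ext (by rw [hval]; omega)
    rw [e2, e1]

/-- `B_n(m,t)` is a minimum blocker: it is a blocker, and
removing any one of its positions destroys the blocker property. -/
theorem flagBlocker_is_minimum_blocker (n m t : ℕ) (hm1 : 1 ≤ m) (hmn : m ≤ n)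
    (ht : t + 1 ≤ m) :
    IsBlocker (FlagBlocker n m t) ∧
      ∀ b ∈ FlagBlocker n m t, ¬ IsBlocker (FlagBlocker n m t \ {b}) := by
  refine ⟨flag_isBlocker n m t hm1 hmn ht, ?_⟩
  rintro ⟨b1, b2⟩ hb
  simp only [FlagBlocker, Set.mem_setOf_eq] at hb
  rcases hb with ⟨h1, h2⟩ | ⟨h1, h2, h3⟩
  · by_cases hs : (b1 : ℕ) + m ≤ n
    · exact X_witness n m t hm1 hmn ht b1 b2 hs (by omega) (by omega)
    · exact Y_witness n m t hm1 hmn ht b1 b2 h1 (by omega) h2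
  · exact X_witness n m t hm1 hmn ht b1 b2 h1 (by omega) (by omega)
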